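/- Let λ : C → A be convolution invertible with convolution inverse λ⁻¹ (i.e. λ(c₁)λ⁻¹(c₂) = λ⁻¹(c₁)λ(c₂) = ε(c)1_A for all c ∈ C). Then the following assertions are equivalent: (1) λ ∈ Q'; (2) for all c ∈ C: λ⁻¹(c₁) λ(c₃)_ψ ⊗ (c₂)^ψ = ε(c)1_A ⊗ x in A ⊗_k C; (3) for all c ∈ C: λ⁻¹(c₁) ⊗ c₂ = λ⁻¹(c)_ψ ⊗ x^ψ in A ⊗_k C (i.e. λ⁻¹ is right C-colinear). -/

import Mathlib

open TensorProduct

noncomputable section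

variable {k A C : Type*} [CommRing k] [Ring A] [Algebra k A]
  [AddCommGroup C] [Module k C] [Coalgebra k C]

/-- An entwining structure `(A, C, ψ)`. -/
structure IsEntwining (k : Type*) {A C : Type*} [CommRing k] [Ring A] [Algebra k A]
    [AddCommGroup C] [Module k C] [Coalgebra k C]
    (ψ : C ⊗[k] A →ₗ[k] A ⊗[k] C) : Prop where
  mul_compat : ψ ∘ₗ LinearMap.lTensor C (LinearMap.mul' k A) =
    LinearMap.rTensor C (LinearMap.mul' k A) ∘ₗ (TensorProduct.assoc k A A C).symm.toLinearMap ∘ₗ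
      LinearMap.lTensor A ψ ∘ₗ (TensorProduct.assoc k A C A).toLinearMap ∘ₗ
      LinearMap.rTensor A ψ ∘ₗ (TensorProduct.assoc k C A A).symm.toLinearMap
  one_compat : ∀ c : C, ψ (c ⊗ₜ[k] 1) = 1 ⊗ₜ[k] c
  comul_compat : LinearMap.lTensor A Coalgebra.comul ∘ₗ ψ =
    (TensorProduct.assoc k A C C).toLinearMap ∘ₗ LinearMap.rTensor C ψ ∘ₗ
      (TensorProduct.assoc k C A C).symm.toLinearMap ∘ₗ LinearMap.lTensor C ψ ∘ₗ
      (TensorProduct.assoc k C C A).toLinearMap ∘ₗ LinearMap.rTensor A Coalgebra.comul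
  counit_compat : ∀ (c : C) (a : A),
    TensorProduct.rid k A (LinearMap.lTensor A Coalgebra.counit (ψ (c ⊗ₜ[k] a))) =
      (Coalgebra.counit (R := k) c) • a

/-- The smash product multiplication on `Hom_k(C,A)`: `(f # g)(c) = f(c₂)_ψ g((c₁)^ψ)`. -/
def smashMul (ψ : C ⊗[k] A →ₗ[k] A ⊗[k] C) (f g : C →ₗ[k] A) : C →ₗ[k] A :=
  LinearMap.mul' k A ∘ₗ LinearMap.lTensor A g ∘ₗ ψ ∘ₗ LinearMap.lTensor C f ∘ₗ Coalgebra.comul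

/-- The unit of `#(C,A)`: `c ↦ ε(c) 1_A`. -/
def smashOne (k : Type*) (A C : Type*) [CommRing k] [Ring A] [Algebra k A]
    [AddCommGroup C] [Module k C] [Coalgebra k C] : C →ₗ[k] A :=
  Algebra.linearMap k A ∘ₗ Coalgebra.counit

/-- The ring morphism `i : A → #(C,A)`, `i(a)(c) = ε(c) a`. -/
def smashIota (k : Type*) {A : Type*} (C : Type*) [CommRing k] [Ring A] [Algebra k A]
    [AddCommGroup C] [Module k C] [Coalgebra k C] (a : A) : C →ₗ[k] A :=
  (Coalgebra.counit : C →ₗ[k] k).smulRight a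


/-- Convolution product on `Hom_k(C,A)`: `(f * g)(c) = f(c₁) g(c₂)`. -/
def conv (f g : C →ₗ[k] A) : C →ₗ[k] A :=
  LinearMap.mul' k A ∘ₗ TensorProduct.map f g ∘ₗ Coalgebra.comul

/-- `q ∈ Q'` iff `q(c₂)_ψ ⊗ (c₁)^ψ = q(c) ⊗ x` for all `c`. -/
def QprimeCond (ψ : C ⊗[k] A →ₗ[k] A ⊗[k] C) (x : C) (q : C →ₗ[k] A) : Prop :=
  ∀ c : C, ψ (LinearMap.lTensor C q (Coalgebra.comul c)) = q c ⊗ₜ[k] x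

/-- The map `c ↦ λ⁻¹(c₁) λ(c₃)_ψ ⊗ (c₂)^ψ`. -/
def lam3 (ψ : C ⊗[k] A →ₗ[k] A ⊗[k] C) (lam lamInv : C →ₗ[k] A) : C →ₗ[k] A ⊗[k] C :=
  LinearMap.rTensor C (LinearMap.mul' k A) ∘ₗ (TensorProduct.assoc k A A C).symm.toLinearMap ∘ₗ
    LinearMap.rTensor (A ⊗[k] C) lamInv ∘ₗ
    LinearMap.lTensor C (ψ ∘ₗ LinearMap.lTensor C lam) ∘ₗ
    LinearMap.lTensor C Coalgebra.comul ∘ₗ Coalgebra.comul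

namespace CleftAux

set_option linter.unusedSectionVars false

variable (k) in
/-- The collapse map `a ⊗ (b ⊗ d) ↦ (a*b) ⊗ d`. -/
def Mmu : A ⊗[k] (A ⊗[k] C) →ₗ[k] A ⊗[k] C :=
  LinearMap.rTensor C (LinearMap.mul' k A) ∘ₗ (TensorProduct.assoc k A A C).symm.toLinearMap

@[simp] lemma Mmu_tmul (a b : A) (d : C) :
    Mmu k (a ⊗ₜ[k] (b ⊗ₜ[k] d)) = (a * b) ⊗ₜ[k] d := by
  simp [Mmu]

lemma Mmu_Mmu (a b : A) (t : A ⊗[k] C) :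
    Mmu k (a ⊗ₜ[k] Mmu k (b ⊗ₜ[k] t)) = Mmu k ((a * b) ⊗ₜ[k] t) := by
  induction t using TensorProduct.induction_on with
  | zero => simp
  | tmul a' d => simp [mul_assoc]
  | add u v hu hv => simp only [tmul_add, map_add, hu, hv]

lemma Mmu_one (t : A ⊗[k] C) : Mmu k ((1 : A) ⊗ₜ[k] t) = t := by
  induction t using TensorProduct.induction_on with
  | zero => simp
  | tmul a' d => simp
  | add u v hu hv => simp only [tmul_add, map_add, hu, hv]

lemma Mmu_smul_one (s : k) (t : A ⊗[k] C) : Mmu k ((s • (1 : A)) ⊗ₜ[k] t) = s • t := by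
  rw [← smul_tmul', map_smul, Mmu_one]

variable (ψ : C ⊗[k] A →ₗ[k] A ⊗[k] C) (x : C) (lam lamInv : C →ₗ[k] A)

/-- `Ξ_b : a ⊗ e ↦ a ⬝ ψ(e ⊗ b)`. -/
def Xi (b : A) : A ⊗[k] C →ₗ[k] A ⊗[k] C :=
  Mmu k ∘ₗ LinearMap.lTensor A ψ ∘ₗ LinearMap.lTensor A ((TensorProduct.mk k C A).flip b)

@[simp] lemma Xi_tmul (b : A) (a : A) (e : C) :
    Xi ψ b (a ⊗ₜ[k] e) = Mmu k (a ⊗ₜ[k] ψ (e ⊗ₜ[k] b)) := by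
  simp [Xi]

lemma xi_aux (b : A) (t : A ⊗[k] C) :
    LinearMap.rTensor C (LinearMap.mul' k A)
      ((TensorProduct.assoc k A A C).symm
        (LinearMap.lTensor A ψ ((TensorProduct.assoc k A C A) (t ⊗ₜ[k] b)))) = Xi ψ b t := by
  induction t using TensorProduct.induction_on with
  | zero => simp
  | tmul a e => simp [Mmu]
  | add u v hu hv => simp only [add_tmul, map_add, hu, hv]

lemma psi_mul (hψ : IsEntwining k ψ) (d : C) (a b : A) :
    ψ (d ⊗ₜ[k] (a * b)) = Xi ψ b (ψ (d ⊗ₜ[k] a)) := by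
  have h := LinearMap.congr_fun hψ.mul_compat (d ⊗ₜ[k] (a ⊗ₜ[k] b))
  simpa [xi_aux] using h


section
variable (ψ : C ⊗[k] A →ₗ[k] A ⊗[k] C) (x : C) (lam lamInv : C →ₗ[k] A)

lemma conv_repr (f g : C →ₗ[k] A) (c : C) {ι : Type*} (r : Coalgebra.Repr k c ι) :
    conv f g c = ∑ i ∈ r.index, f (r.left i) * g (r.right i) := by
  simp only [conv, LinearMap.coe_comp, Function.comp_apply, ← r.eq, map_sum,
    TensorProduct.map_tmul, LinearMap.mul'_apply]

lemma counit_left_smul (c : C) {ι : Type*} (r : Coalgebra.Repr k c ι) :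
    ∑ i ∈ r.index, Coalgebra.counit (R := k) (r.left i) • r.right i = c := by
  calc ∑ i ∈ r.index, Coalgebra.counit (R := k) (r.left i) • r.right i
      = TensorProduct.lid k C
          (∑ i ∈ r.index, Coalgebra.counit (R := k) (r.left i) ⊗ₜ[k] r.right i) := by
        rw [map_sum]; simp only [TensorProduct.lid_tmul]
    _ = TensorProduct.lid k C ((1 : k) ⊗ₜ[k] c) := by rw [Coalgebra.sum_counit_tmul_eq r]
    _ = c := by simp

lemma counit_right_smul (c : C) {ι : Type*} (r : Coalgebra.Repr k c ι) :
    ∑ i ∈ r.index, Coalgebra.counit (R := k) (r.right i) • r.left i = c := by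
  calc ∑ i ∈ r.index, Coalgebra.counit (R := k) (r.right i) • r.left i
      = TensorProduct.rid k C
          (∑ i ∈ r.index, r.left i ⊗ₜ[k] Coalgebra.counit (R := k) (r.right i)) := by
        rw [map_sum]; simp only [TensorProduct.rid_tmul]
    _ = TensorProduct.rid k C (c ⊗ₜ[k] (1 : k)) := by rw [Coalgebra.sum_tmul_counit_eq r]
    _ = c := by simp

lemma lam3_eq (c : C) {ι : Type*} (r : Coalgebra.Repr k c ι) :
    lam3 ψ lam lamInv c =
      ∑ i ∈ r.index, Mmu k (lamInv (r.left i) ⊗ₜ[k]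
        ψ (LinearMap.lTensor C lam (Coalgebra.comul (r.right i)))) := by
  simp only [lam3, LinearMap.coe_comp, Function.comp_apply, LinearEquiv.coe_coe]
  rw [← r.eq]
  simp [map_sum, Mmu]

lemma psi_comul_x (hψ : IsEntwining k ψ) (hx1 : Coalgebra.comul (R := k) x = x ⊗ₜ[k] x)
    (a : A) :
    LinearMap.lTensor A Coalgebra.comul (ψ (x ⊗ₜ[k] a)) =
      TensorProduct.assoc k A C C
        (LinearMap.rTensor C ψ ((TensorProduct.assoc k C A C).symm
          (x ⊗ₜ[k] ψ (x ⊗ₜ[k] a)))) := by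
  have h := LinearMap.congr_fun hψ.comul_compat (x ⊗ₜ[k] a)
  simpa [hx1] using h

/-- `h1 (c ⊗ d) = lam c * lamInv d`. -/
def h1 : C ⊗[k] C →ₗ[k] A := LinearMap.mul' k A ∘ₗ TensorProduct.map lam lamInv

@[simp] lemma h1_tmul (u v : C) : h1 lam lamInv (u ⊗ₜ[k] v) = lam u * lamInv v := by
  simp [h1]

def Wmap : (A ⊗[k] C) ⊗[k] C →ₗ[k] A ⊗[k] C :=
  Mmu k ∘ₗ LinearMap.lTensor A ψ ∘ₗ (TensorProduct.assoc k A C A).toLinearMap ∘ₗ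
    LinearMap.lTensor (A ⊗[k] C) lamInv

@[simp] lemma Wmap_tmul (a : A) (d e : C) :
    Wmap ψ lamInv ((a ⊗ₜ[k] d) ⊗ₜ[k] e) = Mmu k (a ⊗ₜ[k] ψ (d ⊗ₜ[k] lamInv e)) := by
  simp [Wmap]

lemma Wmap_Xi (t : A ⊗[k] C) (e : C) :
    Wmap ψ lamInv (t ⊗ₜ[k] e) = Xi ψ (lamInv e) t := by
  induction t using TensorProduct.induction_on with
  | zero => simp
  | tmul a d => simp
  | add u v hu hv => simp only [add_tmul, map_add, hu, hv]

lemma Wmap_Mmu (a : A) (t : A ⊗[k] C) (e : C) :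
    Wmap ψ lamInv (Mmu k (a ⊗ₜ[k] t) ⊗ₜ[k] e) =
      Mmu k (a ⊗ₜ[k] Wmap ψ lamInv (t ⊗ₜ[k] e)) := by
  induction t using TensorProduct.induction_on with
  | zero => simp
  | tmul b d => simp [Mmu_Mmu]
  | add u v hu hv =>
    simp only [tmul_add, add_tmul, map_add, hu, hv]

lemma Xi_psi_lam (hψ : IsEntwining k ψ) (b : A) (t : C ⊗[k] C) :
    Xi ψ b (ψ (LinearMap.lTensor C lam t)) =
      ψ (LinearMap.lTensor C (LinearMap.mulRight k b ∘ₗ lam) t) := by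
  induction t using TensorProduct.induction_on with
  | zero => simp
  | tmul d e => rw [LinearMap.lTensor_tmul, ← psi_mul ψ hψ]; simp
  | add u v hu hv => simp only [map_add, hu, hv]

variable (k C) in
def Omg : (C ⊗[k] C) ⊗[k] C →ₗ[k] C ⊗[k] (C ⊗[k] (C ⊗[k] C)) :=
  LinearMap.lTensor C (TensorProduct.assoc k C C C).toLinearMap ∘ₗ
    LinearMap.lTensor C (LinearMap.rTensor C (Coalgebra.comul (R := k))) ∘ₗ
    (TensorProduct.assoc k C C C).toLinearMap

@[simp] lemma Omg_tmul (u v e : C) :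
    Omg k C ((u ⊗ₜ[k] v) ⊗ₜ[k] e) =
      u ⊗ₜ[k] (TensorProduct.assoc k C C C ((Coalgebra.comul (R := k) v) ⊗ₜ[k] e)) := by
  simp [Omg]

lemma Omg_assoc_symm (t : C ⊗[k] (C ⊗[k] C)) :
    Omg k C ((TensorProduct.assoc k C C C).symm t) =
      LinearMap.lTensor C ((TensorProduct.assoc k C C C).toLinearMap ∘ₗ
        LinearMap.rTensor C (Coalgebra.comul (R := k))) t := by
  induction t using TensorProduct.induction_on with
  | zero => simp
  | tmul u y =>
    induction y using TensorProduct.induction_on with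
    | zero => simp
    | tmul v e => simp
    | add p q hp hq => simp only [tmul_add, map_add, hp, hq]
  | add p q hp hq => simp only [map_add, hp, hq]

lemma sweedler4 (c : C) :
    Omg k C (LinearMap.rTensor C (Coalgebra.comul (R := k)) (Coalgebra.comul c)) =
      LinearMap.lTensor C
        (LinearMap.lTensor C (Coalgebra.comul (R := k)) ∘ₗ Coalgebra.comul)
        (Coalgebra.comul c) := by
  rw [← Coalgebra.coassoc_symm_apply c, Omg_assoc_symm, ← LinearMap.lTensor_comp_apply,
    LinearMap.comp_assoc, Coalgebra.coassoc]

/-- `B₀` with `lam3 = B₀ ∘ (1 ⊗ Δ) ∘ Δ`. -/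
def B0 : C ⊗[k] (C ⊗[k] C) →ₗ[k] A ⊗[k] C :=
  LinearMap.rTensor C (LinearMap.mul' k A) ∘ₗ (TensorProduct.assoc k A A C).symm.toLinearMap ∘ₗ
    LinearMap.rTensor (A ⊗[k] C) lamInv ∘ₗ
    LinearMap.lTensor C (ψ ∘ₗ LinearMap.lTensor C lam)

lemma lam3_B0 (c : C) :
    lam3 ψ lam lamInv c =
      B0 ψ lam lamInv (LinearMap.lTensor C Coalgebra.comul (Coalgebra.comul c)) := rfl

@[simp] lemma B0_tmul (v : C) (t : C ⊗[k] C) :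
    B0 ψ lam lamInv (v ⊗ₜ[k] t) =
      Mmu k (lamInv v ⊗ₜ[k] ψ (LinearMap.lTensor C lam t)) := by
  simp [B0, Mmu]

def Phi : C ⊗[k] (C ⊗[k] (C ⊗[k] C)) →ₗ[k] A ⊗[k] C :=
  Mmu k ∘ₗ LinearMap.lTensor A (ψ ∘ₗ LinearMap.lTensor C (h1 lam lamInv)) ∘ₗ
    LinearMap.rTensor (C ⊗[k] (C ⊗[k] C)) lamInv

@[simp] lemma Phi_tmul (c₁ : C) (t : C ⊗[k] (C ⊗[k] C)) :
    Phi ψ lam lamInv (c₁ ⊗ₜ[k] t) =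
      Mmu k (lamInv c₁ ⊗ₜ[k] ψ (LinearMap.lTensor C (h1 lam lamInv) t)) := by
  simp [Phi]

def Phi2 : C ⊗[k] (C ⊗[k] (C ⊗[k] C)) →ₗ[k] A ⊗[k] C :=
  Mmu k ∘ₗ LinearMap.lTensor A (ψ ∘ₗ LinearMap.lTensor C lam) ∘ₗ
    LinearMap.rTensor (C ⊗[k] C) (h1 lam lamInv) ∘ₗ
    (TensorProduct.assoc k C C (C ⊗[k] C)).symm.toLinearMap

@[simp] lemma Phi2_tmul (u v : C) (s : C ⊗[k] C) :
    Phi2 ψ lam lamInv (u ⊗ₜ[k] (v ⊗ₜ[k] s)) =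
      Mmu k ((lam u * lamInv v) ⊗ₜ[k] ψ (LinearMap.lTensor C lam s)) := by
  simp [Phi2]

lemma Phi2_B0 (c₁ : C) (u : C ⊗[k] (C ⊗[k] C)) :
    Phi2 ψ lam lamInv (c₁ ⊗ₜ[k] u) = Mmu k (lam c₁ ⊗ₜ[k] B0 ψ lam lamInv u) := by
  induction u using TensorProduct.induction_on with
  | zero => simp
  | tmul v s => rw [Phi2_tmul, B0_tmul, Mmu_Mmu]
  | add p q hp hq => simp only [tmul_add, map_add, hp, hq]

def Ymap : A ⊗[k] C →ₗ[k] A ⊗[k] C :=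
  Mmu k ∘ₗ LinearMap.lTensor A (ψ ∘ₗ LinearMap.lTensor C lam) ∘ₗ
    LinearMap.lTensor A (Coalgebra.comul (R := k))

@[simp] lemma Ymap_tmul (a : A) (d : C) :
    Ymap ψ lam (a ⊗ₜ[k] d) =
      Mmu k (a ⊗ₜ[k] ψ (LinearMap.lTensor C lam (Coalgebra.comul d))) := by
  simp [Ymap]

lemma assoc_psi_Xi (d : C) (t₁ : A ⊗[k] C) :
    Mmu k (LinearMap.lTensor A (ψ ∘ₗ LinearMap.lTensor C lam)
      ((TensorProduct.assoc k A C C) (t₁ ⊗ₜ[k] d))) = Xi ψ (lam d) t₁ := by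
  induction t₁ using TensorProduct.induction_on with
  | zero => simp
  | tmul a e => simp
  | add u v hu hv => simp only [add_tmul, map_add, hu, hv]

lemma Zcalc (hψ : IsEntwining k ψ) (t : A ⊗[k] C) :
    Mmu k (LinearMap.lTensor A (ψ ∘ₗ LinearMap.lTensor C lam)
      ((TensorProduct.assoc k A C C)
        (LinearMap.rTensor C ψ ((TensorProduct.assoc k C A C).symm (x ⊗ₜ[k] t))))) =
      ψ (x ⊗ₜ[k] LinearMap.mul' k A (LinearMap.lTensor A lam t)) := by
  induction t using TensorProduct.induction_on with
  | zero => simp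
  | tmul a d =>
    rw [TensorProduct.assoc_symm_tmul, LinearMap.rTensor_tmul, assoc_psi_Xi,
      ← psi_mul ψ hψ]
    simp
  | add u v hu hv => simp only [tmul_add, map_add, hu, hv]

lemma Y_psi_x (hψ : IsEntwining k ψ) (hx1 : Coalgebra.comul (R := k) x = x ⊗ₜ[k] x)
    (a : A) :
    Ymap ψ lam (ψ (x ⊗ₜ[k] a)) =
      ψ (x ⊗ₜ[k] LinearMap.mul' k A (LinearMap.lTensor A lam (ψ (x ⊗ₜ[k] a)))) := by
  have h0 : Ymap ψ lam (ψ (x ⊗ₜ[k] a)) =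
      Mmu k (LinearMap.lTensor A (ψ ∘ₗ LinearMap.lTensor C lam)
        (LinearMap.lTensor A Coalgebra.comul (ψ (x ⊗ₜ[k] a)))) := rfl
  rw [h0, psi_comul_x ψ x hψ hx1, Zcalc ψ x lam hψ]

lemma lt_h1_assoc (e : C) (t : C ⊗[k] C) :
    LinearMap.lTensor C (h1 lam lamInv) ((TensorProduct.assoc k C C C) (t ⊗ₜ[k] e)) =
      LinearMap.lTensor C (LinearMap.mulRight k (lamInv e) ∘ₗ lam) t := by
  induction t using TensorProduct.induction_on with
  | zero => simp
  | tmul u v => simp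
  | add p q hp hq => simp only [add_tmul, map_add, hp, hq]

end


section
variable (ψ : C ⊗[k] A →ₗ[k] A ⊗[k] C) (x : C) (lam lamInv : C →ₗ[k] A)

lemma imp12 (hinv2 : ∀ c : C, conv lamInv lam c = (Coalgebra.counit (R := k) c) • (1 : A))
    (H1 : QprimeCond ψ x lam) (c : C) :
    lam3 ψ lam lamInv c = (Coalgebra.counit (R := k) c) • ((1 : A) ⊗ₜ[k] x) := by
  have r := Coalgebra.Repr.arbitrary k c
  rw [lam3_eq ψ lam lamInv c r]
  calc ∑ i ∈ r.index, Mmu k (lamInv (r.left i) ⊗ₜ[k]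
        ψ (LinearMap.lTensor C lam (Coalgebra.comul (r.right i))))
      = ∑ i ∈ r.index, (lamInv (r.left i) * lam (r.right i)) ⊗ₜ[k] x := by
        refine Finset.sum_congr rfl fun i _ => ?_
        rw [H1 (r.right i), Mmu_tmul]
    _ = conv lamInv lam c ⊗ₜ[k] x := by
        rw [conv_repr lamInv lam c r, TensorProduct.sum_tmul]
    _ = (Coalgebra.counit (R := k) c) • ((1 : A) ⊗ₜ[k] x) := by
        rw [hinv2, TensorProduct.smul_tmul']

lemma imp21 (hinv1 : ∀ c : C, conv lam lamInv c = (Coalgebra.counit (R := k) c) • (1 : A))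
    (H2 : ∀ c : C, lam3 ψ lam lamInv c = (Coalgebra.counit (R := k) c) • ((1 : A) ⊗ₜ[k] x)) :
    QprimeCond ψ x lam := by
  intro c
  have r := Coalgebra.Repr.arbitrary k c
  have hA : ∑ i ∈ r.index, Mmu k (lam (r.left i) ⊗ₜ[k] lam3 ψ lam lamInv (r.right i)) =
      lam c ⊗ₜ[k] x := by
    calc ∑ i ∈ r.index, Mmu k (lam (r.left i) ⊗ₜ[k] lam3 ψ lam lamInv (r.right i))
        = ∑ i ∈ r.index,
            (Coalgebra.counit (R := k) (r.right i)) • (lam (r.left i) ⊗ₜ[k] x) := by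
          refine Finset.sum_congr rfl fun i _ => ?_
          rw [H2 (r.right i), TensorProduct.tmul_smul, map_smul, Mmu_tmul, mul_one]
      _ = (∑ i ∈ r.index,
            (Coalgebra.counit (R := k) (r.right i)) • lam (r.left i)) ⊗ₜ[k] x := by
          rw [TensorProduct.sum_tmul]
          exact Finset.sum_congr rfl fun i _ => by rw [TensorProduct.smul_tmul']
      _ = lam c ⊗ₜ[k] x := by
          congr 1
          conv_rhs => rw [← counit_right_smul c r]
          rw [map_sum]
          simp only [map_smul]
  have hB : ∑ i ∈ r.index, Mmu k (lam (r.left i) ⊗ₜ[k] lam3 ψ lam lamInv (r.right i)) =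
      ψ (LinearMap.lTensor C lam (Coalgebra.comul c)) := by
    have e1 : ∑ i ∈ r.index, Mmu k (lam (r.left i) ⊗ₜ[k] lam3 ψ lam lamInv (r.right i)) =
        Phi2 ψ lam lamInv (LinearMap.lTensor C (LinearMap.lTensor C Coalgebra.comul)
          (LinearMap.lTensor C Coalgebra.comul (Coalgebra.comul c))) := by
      conv_rhs => rw [← r.eq]
      rw [map_sum, map_sum, map_sum]
      refine Finset.sum_congr rfl fun i _ => ?_
      rw [lam3_B0, LinearMap.lTensor_tmul, LinearMap.lTensor_tmul, Phi2_B0]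
    have e2 : LinearMap.lTensor C (Coalgebra.comul (R := k)) (Coalgebra.comul c) =
        TensorProduct.assoc k C C C
          (LinearMap.rTensor C Coalgebra.comul (Coalgebra.comul c)) :=
      (Coalgebra.coassoc_apply c).symm
    rw [e1, e2]
    calc Phi2 ψ lam lamInv (LinearMap.lTensor C (LinearMap.lTensor C Coalgebra.comul)
          (TensorProduct.assoc k C C C
            (LinearMap.rTensor C Coalgebra.comul (Coalgebra.comul c))))
        = ∑ i ∈ r.index, Phi2 ψ lam lamInv
            (LinearMap.lTensor C (LinearMap.lTensor C Coalgebra.comul)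
              (TensorProduct.assoc k C C C
                (LinearMap.rTensor C Coalgebra.comul (r.left i ⊗ₜ[k] r.right i)))) := by
          conv_lhs => rw [← r.eq]
          rw [map_sum, map_sum, map_sum, map_sum]
      _ = ∑ i ∈ r.index, (Coalgebra.counit (R := k) (r.left i)) •
            ψ (LinearMap.lTensor C lam (Coalgebra.comul (r.right i))) := by
          refine Finset.sum_congr rfl fun i _ => ?_
          have s := Coalgebra.Repr.arbitrary k (r.left i)
          rw [LinearMap.rTensor_tmul, ← s.eq, TensorProduct.sum_tmul, map_sum, map_sum,
            map_sum]
          calc ∑ j ∈ s.index, Phi2 ψ lam lamInv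
                (LinearMap.lTensor C (LinearMap.lTensor C Coalgebra.comul)
                  (TensorProduct.assoc k C C C
                    ((s.left j ⊗ₜ[k] s.right j) ⊗ₜ[k] r.right i)))
              = ∑ j ∈ s.index, Mmu k ((lam (s.left j) * lamInv (s.right j)) ⊗ₜ[k]
                  ψ (LinearMap.lTensor C lam (Coalgebra.comul (r.right i)))) := by
                refine Finset.sum_congr rfl fun j _ => ?_
                rw [TensorProduct.assoc_tmul, LinearMap.lTensor_tmul,
                  LinearMap.lTensor_tmul, Phi2_tmul]
            _ = (Coalgebra.counit (R := k) (r.left i)) •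
                  ψ (LinearMap.lTensor C lam (Coalgebra.comul (r.right i))) := by
                rw [← map_sum, ← TensorProduct.sum_tmul,
                  ← conv_repr lam lamInv (r.left i) s, hinv1, Mmu_smul_one]
      _ = ψ (LinearMap.lTensor C lam (Coalgebra.comul c)) := by
          conv_rhs => rw [← counit_left_smul c r]
          rw [map_sum, map_sum, map_sum]
          exact Finset.sum_congr rfl fun i _ => by simp only [map_smul]
  rw [← hB]
  exact hA

lemma imp23 (hψ : IsEntwining k ψ)
    (hinv1 : ∀ c : C, conv lam lamInv c = (Coalgebra.counit (R := k) c) • (1 : A))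
    (H2 : ∀ c : C, lam3 ψ lam lamInv c = (Coalgebra.counit (R := k) c) • ((1 : A) ⊗ₜ[k] x))
    (c : C) :
    LinearMap.rTensor C lamInv (Coalgebra.comul c) = ψ (x ⊗ₜ[k] lamInv c) := by
  have r := Coalgebra.Repr.arbitrary k c
  have s1 : ψ (x ⊗ₜ[k] lamInv c) =
      ∑ i ∈ r.index, Wmap ψ lamInv (lam3 ψ lam lamInv (r.left i) ⊗ₜ[k] r.right i) := by
    calc ψ (x ⊗ₜ[k] lamInv c)
        = Wmap ψ lamInv (((1 : A) ⊗ₜ[k] x) ⊗ₜ[k] c) := by rw [Wmap_tmul, Mmu_one]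
      _ = ∑ i ∈ r.index, Wmap ψ lamInv
            (((Coalgebra.counit (R := k) (r.left i)) • ((1 : A) ⊗ₜ[k] x)) ⊗ₜ[k]
              r.right i) := by
          conv_lhs => rw [← counit_left_smul c r]
          rw [TensorProduct.tmul_sum, map_sum]
          exact Finset.sum_congr rfl fun i _ => by rw [TensorProduct.smul_tmul]
      _ = ∑ i ∈ r.index, Wmap ψ lamInv (lam3 ψ lam lamInv (r.left i) ⊗ₜ[k] r.right i) :=
          Finset.sum_congr rfl fun i _ => by rw [H2 (r.left i)]
  have s2 : ∑ i ∈ r.index, Wmap ψ lamInv (lam3 ψ lam lamInv (r.left i) ⊗ₜ[k] r.right i) =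
      Phi ψ lam lamInv (Omg k C
        (LinearMap.rTensor C Coalgebra.comul (Coalgebra.comul c))) := by
    conv_rhs => rw [← r.eq]
    rw [map_sum, map_sum, map_sum]
    refine Finset.sum_congr rfl fun i _ => ?_
    have s := Coalgebra.Repr.arbitrary k (r.left i)
    rw [lam3_eq ψ lam lamInv (r.left i) s, LinearMap.rTensor_tmul, ← s.eq,
      TensorProduct.sum_tmul, map_sum, TensorProduct.sum_tmul, map_sum, map_sum]
    refine Finset.sum_congr rfl fun j _ => ?_
    rw [Omg_tmul, Phi_tmul, lt_h1_assoc, Wmap_Mmu, Wmap_Xi, Xi_psi_lam ψ lam hψ]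
  have s4 : Phi ψ lam lamInv (LinearMap.lTensor C
      (LinearMap.lTensor C (Coalgebra.comul (R := k)) ∘ₗ Coalgebra.comul)
      (Coalgebra.comul c)) =
      LinearMap.rTensor C lamInv (Coalgebra.comul c) := by
    conv_lhs => rw [← r.eq]
    conv_rhs => rw [← r.eq]
    rw [map_sum, map_sum, map_sum]
    refine Finset.sum_congr rfl fun i _ => ?_
    have inner : LinearMap.lTensor C (h1 lam lamInv)
        (LinearMap.lTensor C Coalgebra.comul (Coalgebra.comul (r.right i))) =
        (r.right i) ⊗ₜ[k] (1 : A) := by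
      rw [← LinearMap.lTensor_comp_apply]
      have hmap : (h1 lam lamInv ∘ₗ
          (Coalgebra.comul (R := k) (A := C) : C →ₗ[k] C ⊗[k] C)) =
          Algebra.linearMap k A ∘ₗ (Coalgebra.counit : C →ₗ[k] k) := by
        apply LinearMap.ext; intro d
        have hd : h1 lam lamInv (Coalgebra.comul d) = conv lam lamInv d := rfl
        rw [LinearMap.comp_apply, hd, hinv1 d]
        simp [Algebra.linearMap_apply, Algebra.algebraMap_eq_smul_one]
      rw [hmap, LinearMap.lTensor_comp_apply, Coalgebra.lTensor_counit_comul]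
      simp
    rw [LinearMap.lTensor_tmul, LinearMap.comp_apply, Phi_tmul, inner,
      hψ.one_compat (r.right i), Mmu_tmul, mul_one, LinearMap.rTensor_tmul]
  rw [s1, s2, sweedler4 c, s4]

lemma imp32 (hψ : IsEntwining k ψ) (hx1 : Coalgebra.comul (R := k) x = x ⊗ₜ[k] x)
    (hinv2 : ∀ c : C, conv lamInv lam c = (Coalgebra.counit (R := k) c) • (1 : A))
    (H3 : ∀ c : C, LinearMap.rTensor C lamInv (Coalgebra.comul c) = ψ (x ⊗ₜ[k] lamInv c))
    (c : C) :
    lam3 ψ lam lamInv c = (Coalgebra.counit (R := k) c) • ((1 : A) ⊗ₜ[k] x) := by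
  have r := Coalgebra.Repr.arbitrary k c
  have s1 : lam3 ψ lam lamInv c =
      Ymap ψ lam (LinearMap.rTensor C lamInv (Coalgebra.comul c)) := by
    rw [lam3_eq ψ lam lamInv c r]
    conv_rhs => rw [← r.eq]
    rw [map_sum, map_sum]
    exact Finset.sum_congr rfl fun i _ => by rw [LinearMap.rTensor_tmul, Ymap_tmul]
  rw [s1, H3 c, Y_psi_x ψ x lam hψ hx1, ← H3 c]
  have s2 : LinearMap.mul' k A (LinearMap.lTensor A lam
      (LinearMap.rTensor C lamInv (Coalgebra.comul c))) = conv lamInv lam c := by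
    rw [conv_repr lamInv lam c r]
    conv_lhs => rw [← r.eq]
    rw [map_sum, map_sum, map_sum]
    exact Finset.sum_congr rfl fun i _ => by simp
  rw [s2, hinv2 c, TensorProduct.tmul_smul, map_smul, hψ.one_compat]

end

end CleftAux

/-- For a convolution invertible `λ : C → A`, the following are equivalent:
(1) `λ ∈ Q'`; (2) `λ⁻¹(c₁) λ(c₃)_ψ ⊗ (c₂)^ψ = ε(c) 1 ⊗ x`;
(3) `λ⁻¹(c₁) ⊗ c₂ = λ⁻¹(c)_ψ ⊗ x^ψ` (i.e. `λ⁻¹` is right `C`-colinear). -/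


theorem cleft_lambda_tfae (ψ : C ⊗[k] A →ₗ[k] A ⊗[k] C) (hψ : IsEntwining k ψ)
    (x : C) (hx1 : Coalgebra.comul (R := k) x = x ⊗ₜ[k] x)
    (hx2 : Coalgebra.counit (R := k) x = (1 : k))
    (lam lamInv : C →ₗ[k] A)
    (hinv1 : ∀ c : C, conv lam lamInv c = (Coalgebra.counit (R := k) c) • (1 : A))
    (hinv2 : ∀ c : C, conv lamInv lam c = (Coalgebra.counit (R := k) c) • (1 : A)) :
    (QprimeCond ψ x lam ↔
      (∀ c : C, lam3 ψ lam lamInv c =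
        (Coalgebra.counit (R := k) c) • ((1 : A) ⊗ₜ[k] x))) ∧
    ((∀ c : C, lam3 ψ lam lamInv c =
        (Coalgebra.counit (R := k) c) • ((1 : A) ⊗ₜ[k] x)) ↔
      (∀ c : C, LinearMap.rTensor C lamInv (Coalgebra.comul c) = ψ (x ⊗ₜ[k] lamInv c))) := by
  exact ⟨⟨fun H1 c => CleftAux.imp12 ψ x lam lamInv hinv2 H1 c,
    fun H2 => CleftAux.imp21 ψ x lam lamInv hinv1 H2⟩,
    ⟨fun H2 c => CleftAux.imp23 ψ x lam lamInv hψ hinv1 H2 c,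
    fun H3 c => CleftAux.imp32 ψ x lam lamInv hψ hx1 hinv2 H3 c⟩⟩

end
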